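/- Let w be a word over 𝒩 = {1' < 1 < 2' < 2 < ⋯} such that (i) the sequence (c_k(w) + c_{k'}(w))_{k≥1} is a strict partition and (ii) for each k ≥ 1, the rightmost letter x of w with |x| = k is unprimed (x = k). Then w satisfies the lattice property of Definition 3.5 (Stembridge's lattice property via the doubled word w ŵ_rev) if and only if w satisfies the 'lattice property' of Definition 3.3 (conditions (L1), (L2), (L3) on the starred word w*). -/

import Mathlib

/- Letters of 𝒩 = {1' < 1 < 2' < 2 < ⋯} are pairs `(k, b) : ℕ × Bool`:
`(k, false)` is the unprimed letter `k`, `(k, true)` is the primed letter `k'`. -/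

/-- number of unprimed letters `k` in `w`, i.e. `c_k(w)`. -/
def cntU (w : List (ℕ × Bool)) (k : ℕ) : ℕ := (w.filter fun x => x = (k, false)).length

/-- number of primed letters `k'` in `w`, i.e. `c_{k'}(w)`. -/
def cntP (w : List (ℕ × Bool)) (k : ℕ) : ℕ := (w.filter fun x => x = (k, true)).length

/-- number of letters of value `k`, i.e. `c_k(w) + c_{k'}(w)`. -/
def valCount (w : List (ℕ × Bool)) (k : ℕ) : ℕ := (w.filter fun x => x.1 = k).length

/-- the `i`-th letter of `w` (0-based). -/
def getL (w : List (ℕ × Bool)) (i : ℕ) : ℕ × Bool := w.getD i (0, false)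

/-- the value of the `i`-th letter of the starred word `w*` (same as the value in `w`). -/
def starVal (w : List (ℕ × Bool)) (i : ℕ) : ℕ := (getL w i).1

/-- the subscript of the `i`-th letter in the starred word `w*`: for each value `k`, the
unprimed `k`'s are labelled `1, 2, …` from left to right, and then the primed `k'`'s are
labelled from right to left continuing from `c_k(w) + 1`. -/
def starSub (w : List (ℕ × Bool)) (i : ℕ) : ℕ :=
  if (getL w i).2 = false then cntU (w.take i) (getL w i).1 + 1
  else cntU w (getL w i).1 + cntP (w.drop (i + 1)) (getL w i).1 + 1

/-- Definition 3.3: the "lattice property" (L1), (L2), (L3) of the starred word `w*`. -/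
def LatticeNew (w : List (ℕ × Bool)) : Prop :=
  (∀ k, 1 ≤ k → ∀ i < w.length, starVal w i = k → starSub w i = 1 →
    ∀ j < i, starVal w j ≠ k + 1) ∧
  (∀ k m, 1 ≤ k → 1 ≤ m → ∀ s t, s < t → t < w.length →
    starVal w s = k + 1 → starSub w s = m → starVal w t = k → starSub w t = m + 1 →
    ∀ u, s ≤ u → u ≤ t → starVal w u = k + 1 → starSub w u ≤ m) ∧
  (∀ k m, 1 ≤ k → 1 ≤ m → ∀ s t, s < t → t < w.length →
    starVal w s = k → starSub w s = m + 1 → starVal w t = k + 1 → starSub w t = m →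
    ∀ u, s ≤ u → u ≤ t → starVal w u = k → m + 1 ≤ starSub w u)

/-- `ŵ`: replace each unprimed `k` by `(k+1)'` and each primed `k'` by unprimed `k`. -/
def hatW (w : List (ℕ × Bool)) : List (ℕ × Bool) :=
  w.map fun x => if x.2 then (x.1, false) else (x.1 + 1, true)

/-- the doubled word `w ŵ_rev`. -/
def doubled (w : List (ℕ × Bool)) : List (ℕ × Bool) := w ++ (hatW w).reverse

/-- Definition 3.5 (Stembridge): with `a = w ŵ_rev` and `m_k(i)` the number of unprimed
`k`'s among the first `i` letters of `a`, the lattice property states that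
`m_{k+1}(i) = m_k(i)` implies that the `(i+1)`-st letter of `a` has value `≠ k+1`. -/
def LatticeSt (w : List (ℕ × Bool)) : Prop :=
  ∀ k, 1 ≤ k → ∀ i < (doubled w).length,
    cntU ((doubled w).take i) (k + 1) = cntU ((doubled w).take i) k →
    starVal (doubled w) i ≠ k + 1

namespace Aux

def fC (w : List (ℕ × Bool)) (k i : ℕ) : ℕ := cntU (w.take i) k
def FC (w : List (ℕ × Bool)) (k i : ℕ) : ℕ := cntU w k + cntP (w.drop i) k

variable {w : List (ℕ × Bool)} {k i j m σ : ℕ}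

lemma cntU_append (a b : List (ℕ × Bool)) (k : ℕ) : cntU (a ++ b) k = cntU a k + cntU b k := by
  simp [cntU, List.filter_append]

lemma fC_zero : fC w k 0 = 0 := by simp [fC, cntU]

lemma fC_len : fC w k w.length = cntU w k := by simp [fC]

lemma fC_le : fC w k i ≤ cntU w k :=
  List.Sublist.length_le (List.Sublist.filter _ (List.take_sublist i w))

lemma fC_mono (h : i ≤ j) : fC w k i ≤ fC w k j := by
  have h1 : w.take i = (w.take j).take i := by
    rw [List.take_take, Nat.min_eq_left h]
  rw [fC, h1]
  exact List.Sublist.length_le (List.Sublist.filter _ (List.take_sublist i _))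

lemma fC_stop (h : w.length ≤ i) : fC w k i = cntU w k := by
  rw [fC, List.take_of_length_le h]

lemma fC_succ (h : i < w.length) :
    fC w k (i + 1) = fC w k i + if getL w i = (k, false) then 1 else 0 := by
  have h1 : w.take (i + 1) = w.take i ++ [w[i]] := by
    rw [List.take_succ, List.getElem?_eq_getElem h]; rfl
  have h2 : getL w i = w[i] := List.getD_eq_getElem w _ h
  have h3 : cntU [w[i]] k = if w[i] = (k, false) then 1 else 0 := by
    by_cases hx : w[i] = (k, false) <;> simp [cntU, hx]
  rw [fC, h1, cntU_append, h2, ← fC, h3]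

lemma fC_succ_eq (h : i < w.length) (hx : getL w i = (k, false)) :
    fC w k (i + 1) = fC w k i + 1 := by rw [fC_succ h, if_pos hx]

lemma fC_succ_ne (hx : ¬ getL w i = (k, false)) :
    fC w k (i + 1) = fC w k i := by
  by_cases h : i < w.length
  · rw [fC_succ h, if_neg hx]; omega
  · rw [fC_stop (by omega), fC_stop (by omega)]

lemma unprimed_lt (h : i < w.length) (hx : getL w i = (k, false)) : fC w k i < cntU w k := by
  have := fC_succ_eq h hx
  have := fC_le (w := w) (k := k) (i := i + 1)
  omega

lemma FC_len : FC w k w.length = cntU w k := by simp [FC, cntP]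

lemma FC_stop (h : w.length ≤ i) : FC w k i = cntU w k := by
  rw [FC, List.drop_eq_nil_of_le h]; simp [cntP]

lemma FC_zero : FC w k 0 = cntU w k + cntP w k := by simp [FC]

lemma cntU_le_FC : cntU w k ≤ FC w k i := Nat.le_add_right _ _

lemma FC_anti (h : i ≤ j) : FC w k j ≤ FC w k i := by
  have h1 : w.drop j = (w.drop i).drop (j - i) := by
    rw [List.drop_drop]; congr 1; omega
  have : cntP (w.drop j) k ≤ cntP (w.drop i) k := by
    rw [h1]
    exact List.Sublist.length_le (List.Sublist.filter _ (List.drop_sublist _ _))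
  simp only [FC]; omega

lemma FC_le_FC0 : FC w k i ≤ cntU w k + cntP w k := by
  rw [← FC_zero]; exact FC_anti (Nat.zero_le i)

lemma FC_succ (h : i < w.length) :
    FC w k i = FC w k (i + 1) + if getL w i = (k, true) then 1 else 0 := by
  have h1 : w.drop i = w[i] :: w.drop (i + 1) := List.drop_eq_getElem_cons h
  have h2 : getL w i = w[i] := List.getD_eq_getElem w _ h
  have h3 : cntP (w.drop i) k = cntP (w.drop (i+1)) k + if w[i] = (k, true) then 1 else 0 := by
    simp only [cntP]; rw [h1, List.filter_cons]
    by_cases hx : w[i] = (k, true) <;> simp [hx]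
  rw [FC, FC, h3, h2]; by_cases hx : w[i] = (k, true) <;> simp [hx] <;> omega

lemma FC_succ_eq (h : i < w.length) (hx : getL w i = (k, true)) :
    FC w k i = FC w k (i + 1) + 1 := by rw [FC_succ h, if_pos hx]

lemma FC_succ_ne (hx : ¬ getL w i = (k, true)) :
    FC w k i = FC w k (i + 1) := by
  by_cases h : i < w.length
  · rw [FC_succ h, if_neg hx]; omega
  · rw [FC_stop (by omega), FC_stop (by omega)]

/-- existence of an unprimed letter before `i` with prescribed count -/
lemma E1 (h : m < fC w k i) :
    ∃ s, s < i ∧ s < w.length ∧ getL w s = (k, false) ∧ fC w k s = m := by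
  induction i with
  | zero => rw [fC_zero] at h; omega
  | succ n ih =>
    by_cases hn : n < w.length
    · by_cases hx : getL w n = (k, false)
      · rw [fC_succ_eq hn hx] at h
        rcases Nat.lt_or_ge m (fC w k n) with h2 | h2
        · obtain ⟨s, h3, h4⟩ := ih h2; exact ⟨s, by omega, h4⟩
        · exact ⟨n, by omega, hn, hx, by omega⟩
      · rw [fC_succ_ne hx] at h
        obtain ⟨s, h3, h4⟩ := ih h; exact ⟨s, by omega, h4⟩
    · rw [fC_stop (by omega)] at h
      have := fC_le (w := w) (k := k) (i := n)
      have h2 : m < fC w k n := by rw [fC_stop (by omega)]; omega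
      obtain ⟨s, h3, h4⟩ := ih h2; exact ⟨s, by omega, h4⟩

/-- existence of an unprimed letter at position `≥ i` with prescribed count -/
lemma E2 (h1 : fC w k i ≤ m) (h2 : m < cntU w k) :
    ∃ t, i ≤ t ∧ t < w.length ∧ getL w t = (k, false) ∧ fC w k t = m := by
  have h3 : m < fC w k w.length := by rw [fC_len]; exact h2
  obtain ⟨s, _, hsl, hx, hfs⟩ := E1 h3
  refine ⟨s, ?_, hsl, hx, hfs⟩
  by_contra hc
  have h4 : s + 1 ≤ i := by omega
  have := fC_succ_eq hsl hx
  have := fC_mono (w := w) (k := k) h4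
  omega

lemma E3aux : ∀ d i, w.length - i ≤ d → cntU w k < σ → σ ≤ FC w k i →
    ∃ y, i ≤ y ∧ y < w.length ∧ getL w y = (k, true) ∧ FC w k (y + 1) + 1 = σ := by
  intro d
  induction d with
  | zero =>
    intro i hd h1 h2
    rw [FC_stop (by omega)] at h2; omega
  | succ n ih =>
    intro i hd h1 h2
    by_cases hN : w.length ≤ i
    · rw [FC_stop hN] at h2; omega
    push_neg at hN
    by_cases hσ : σ ≤ FC w k (i + 1)
    · obtain ⟨y, hy1, hy2⟩ := ih (i + 1) (by omega) h1 hσ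
      exact ⟨y, by omega, hy2⟩
    · push_neg at hσ
      have h5 := FC_succ (w := w) (k := k) hN
      by_cases hx : getL w i = (k, true)
      · rw [if_pos hx] at h5
        exact ⟨i, le_refl _, hN, hx, by omega⟩
      · rw [if_neg hx] at h5; omega

/-- existence of a primed letter at position `≥ i` with prescribed sub `σ` -/
lemma E3 (h1 : cntU w k < σ) (h2 : σ ≤ FC w k i) :
    ∃ y, i ≤ y ∧ y < w.length ∧ getL w y = (k, true) ∧ FC w k (y + 1) + 1 = σ :=
  E3aux w.length i (by omega) h1 h2

/-- existence of a primed letter before `i` with prescribed sub `σ` -/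
lemma E3' (h1 : FC w k i < σ) (h2 : σ ≤ FC w k 0) :
    ∃ y, y < i ∧ y < w.length ∧ getL w y = (k, true) ∧ FC w k (y + 1) + 1 = σ := by
  have h0 : cntU w k < σ := by
    have := cntU_le_FC (w := w) (k := k) (i := i); omega
  obtain ⟨y, _, hyl, hx, hfy⟩ := E3 h0 h2
  refine ⟨y, ?_, hyl, hx, hfy⟩
  by_contra hc
  have h4 : i ≤ y := by omega
  have h5 := FC_succ_eq hyl hx
  have := FC_anti (w := w) (k := k) h4
  omega

lemma one_le_cntP (h : i < w.length) (hx : getL w i = (k, true)) : 1 ≤ cntP w k := by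
  have h5 := FC_succ_eq h hx
  have := FC_le_FC0 (w := w) (k := k) (i := i)
  have := cntU_le_FC (w := w) (k := k) (i := i + 1)
  omega

lemma valCount_split : valCount w k = cntU w k + cntP w k := by
  induction w with
  | nil => simp [valCount, cntU, cntP]
  | cons x l ih =>
    rcases x with ⟨a, b⟩
    by_cases ha : a = k <;> cases b <;>
      simp [valCount, cntU, cntP, List.filter_cons, ha] at * <;> omega

lemma one_le_valCount (h : i < w.length) (hv : (getL w i).1 = k) : 1 ≤ valCount w k := by
  have h2 : getL w i = w[i] := List.getD_eq_getElem w _ h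
  have hm : w[i] ∈ w.filter fun x => x.1 = k := by
    rw [List.mem_filter]
    exact ⟨List.getElem_mem h, by rw [← h2]; simp [hv]⟩
  have := List.length_pos_iff.mpr (List.ne_nil_of_mem hm)
  unfold valCount; omega



variable {w : List (ℕ × Bool)} {k : ℕ}

lemma getL_eq {i κ : ℕ} {b : Bool} (h1 : starVal w i = κ) (h2 : (getL w i).2 = b) :
    getL w i = (κ, b) := Prod.ext h1 h2

lemma starSub_unprimed {κ i : ℕ} (hx : getL w i = (κ, false)) :
    starSub w i = fC w κ i + 1 := by simp [starSub, hx, fC]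

lemma starSub_primed {κ i : ℕ} (hx : getL w i = (κ, true)) :
    starSub w i = FC w κ (i + 1) + 1 := by simp [starSub, hx, FC]

lemma HRcount (hr : ∀ i < w.length, starVal w i = k →
      (∀ j, i < j → j < w.length → starVal w j ≠ k) → (getL w i).2 = false) :
    ∀ i < w.length, getL w i = (k, true) → fC w k i < cntU w k := by
  intro i hiN hx
  by_contra hc
  push_neg at hc
  have hfi : fC w k i = cntU w k := le_antisymm fC_le hc
  have h1 := FC_succ_eq hiN hx
  have h3 : cntU w k + 1 ≤ FC w k i := by
    have := cntU_le_FC (w := w) (k := k) (i := i + 1); omega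
  obtain ⟨y, hiy, hyN, hy, hFy⟩ := E3 (by omega) h3
  have hfy : fC w k y = cntU w k := le_antisymm fC_le (by
    have := fC_mono (w := w) (k := k) hiy; omega)
  have h4 : (getL w y).2 = false := by
    apply hr y hyN (by simp [starVal, hy])
    intro j hyj hjN hvj
    cases hb : (getL w j).2
    · have hxj : getL w j = (k, false) := getL_eq hvj hb
      have h5 := fC_succ_eq hjN hxj
      have h6 : fC w k y ≤ fC w k j := fC_mono (by omega)
      have := fC_le (w := w) (k := k) (i := j + 1)
      omega
    · have hxj : getL w j = (k, true) := getL_eq hvj hb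
      have h5 := FC_succ_eq hjN hxj
      have h6 : FC w k j ≤ FC w k (y + 1) := FC_anti (by omega)
      have := cntU_le_FC (w := w) (k := k) (i := j + 1)
      omega
  rw [hy] at h4
  simp at h4

lemma c0p0 (hrk : ∀ i < w.length, getL w i = (k, true) → fC w k i < cntU w k)
    (h0 : cntU w k = 0) : cntP w k = 0 := by
  by_contra hp0
  obtain ⟨y, _, hyN, hxy, _⟩ := E3 (w := w) (k := k) (σ := 1) (i := 0)
    (by omega) (by rw [FC_zero]; omega)
  have := hrk y hyN hxy; omega

section NewToSt

variable (hk : 1 ≤ k)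
  (hL1 : ∀ i < w.length, starVal w i = k → starSub w i = 1 → ∀ j < i, starVal w j ≠ k + 1)
  (hL2 : ∀ m, 1 ≤ m → ∀ s t, s < t → t < w.length →
    starVal w s = k + 1 → starSub w s = m → starVal w t = k → starSub w t = m + 1 →
    ∀ u, s ≤ u → u ≤ t → starVal w u = k + 1 → starSub w u ≤ m)
  (hL3 : ∀ m, 1 ≤ m → ∀ s t, s < t → t < w.length →
    starVal w s = k → starSub w s = m + 1 → starVal w t = k + 1 → starSub w t = m →
    ∀ u, s ≤ u → u ≤ t → starVal w u = k → m + 1 ≤ starSub w u)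
  (hrk : ∀ i < w.length, getL w i = (k, true) → fC w k i < cntU w k)
  (hp : valCount w (k + 1) ≤ valCount w k ∧
      (valCount w (k + 1) ≠ 0 → valCount w (k + 1) < valCount w k))

include hL1 hL2 in
lemma Vlt {j s t : ℕ} (hsN : s < w.length) (htN : t < w.length)
    (hxs : getL w s = (k + 1, false)) (hfs : fC w (k + 1) s = j)
    (hxt : getL w t = (k, false)) (hft : fC w k t = j) (hst : s < t) : False := by
  cases j with
  | zero =>
    exact hL1 t htN (by simp [starVal, hxt]) (by rw [starSub_unprimed hxt, hft]) s hst
      (by simp [starVal, hxs])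
  | succ n =>
    obtain ⟨s₀, hs₀s, hs₀N, hx₀, hf₀⟩ := E1 (show n < fC w (k + 1) s by omega)
    have := hL2 (n + 1) (by omega) s₀ t (by omega) htN (by simp [starVal, hx₀])
      (by rw [starSub_unprimed hx₀, hf₀]) (by simp [starVal, hxt])
      (by rw [starSub_unprimed hxt, hft]) s (by omega) (by omega) (by simp [starVal, hxs])
    rw [starSub_unprimed hxs, hfs] at this
    omega

include hL1 hL2 hL3 hrk hp in
lemma lemV (hc' : cntU w (k + 1) ≠ 0) : cntU w (k + 1) < cntU w k := by
  have hvv' : valCount w (k + 1) < valCount w k := by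
    apply hp.2
    rw [valCount_split]; omega
  rw [valCount_split, valCount_split] at hvv'
  have hc : 1 ≤ cntU w k := by
    by_contra h0
    have h1 : cntU w k = 0 := by omega
    have := c0p0 hrk h1
    omega
  by_contra hcc
  push_neg at hcc
  obtain ⟨s, _, hsN, hxs, hfs⟩ := E1 (w := w) (k := k + 1) (i := w.length)
    (m := cntU w k - 1) (by rw [fC_len]; omega)
  obtain ⟨t, _, htN, hxt, hft⟩ := E1 (w := w) (k := k) (i := w.length)
    (m := cntU w k - 1) (by rw [fC_len]; omega)
  rcases lt_trichotomy s t with h | h | h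
  · exact Vlt hL1 hL2 hsN htN hxs hfs hxt hft h
  · rw [h, hxt] at hxs; simp at hxs
  · have hp1 : 1 ≤ cntP w k := by omega
    obtain ⟨y, _, hyN, hxy, hFy⟩ := E3 (w := w) (k := k) (σ := cntU w k + 1) (i := 0)
      (by omega) (by rw [FC_zero]; omega)
    have hyt : y < t := by
      rcases lt_trichotomy y t with h' | h' | h'
      · exact h'
      · rw [h', hxt] at hxy; simp at hxy
      · have := hrk y hyN hxy
        have h3 := fC_succ_eq htN hxt
        have := fC_mono (w := w) (k := k) (show t + 1 ≤ y by omega)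
        omega
    have := hL3 (cntU w k) hc y s (by omega) hsN (by simp [starVal, hxy])
      (by rw [starSub_primed hxy]; omega) (by simp [starVal, hxs])
      (by rw [starSub_unprimed hxs]; omega)
      t (by omega) (by omega) (by simp [starVal, hxt])
    rw [starSub_unprimed hxt] at this
    omega

include hL1 hL2 hL3 hrk hp in
lemma SA_of_new : ∀ i < w.length, (getL w i).1 = k + 1 →
    fC w (k + 1) i ≠ fC w k i := by
  intro i hiN hval heq
  rcases Nat.eq_zero_or_pos (fC w k i) with h0 | hpos
  · rcases Nat.eq_zero_or_pos (cntU w k) with hc0 | hc1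
    · have hp0 := c0p0 hrk hc0
      have hv1 := one_le_valCount hiN hval
      have := hp.2 (by omega)
      rw [valCount_split (k := k)] at this
      omega
    · obtain ⟨t, hit, htN, hxt, hft⟩ := E2 (w := w) (k := k) (i := i) (m := 0)
        (by omega) (by omega)
      have hne : i ≠ t := by intro h; rw [h, hxt] at hval; simp at hval
      exact hL1 t htN (by simp [starVal, hxt]) (by rw [starSub_unprimed hxt, hft]) i
        (by omega) (by simp [starVal, hval])
  · obtain ⟨s, hsi, hsN, hxs, hfs⟩ := E1 (show fC w k i - 1 < fC w (k + 1) i by omega)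
    by_cases hmc : fC w k i < cntU w k
    · obtain ⟨t, hit, htN, hxt, hft⟩ := E2 (w := w) (k := k) (i := i) (m := fC w k i)
        (le_refl _) hmc
      have hne : i ≠ t := by intro h; rw [h, hxt] at hval; simp at hval
      have hsub := hL2 (fC w k i) hpos s t (by omega) htN (by simp [starVal, hxs])
        (by rw [starSub_unprimed hxs, hfs]; omega) (by simp [starVal, hxt])
        (by rw [starSub_unprimed hxt, hft]) i (by omega) (by omega)
        (by simp [starVal, hval])
      cases hb : (getL w i).2
      · have hxi : getL w i = (k + 1, false) := getL_eq hval hb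
        rw [starSub_unprimed hxi] at hsub
        omega
      · have hxi : getL w i = (k + 1, true) := getL_eq hval hb
        rw [starSub_primed hxi] at hsub
        have h2 : fC w (k + 1) i ≤ cntU w (k + 1) := fC_le
        have h3 : cntU w (k + 1) ≤ FC w (k + 1) (i + 1) := cntU_le_FC
        omega
    · have hmc' : fC w k i = cntU w k := by have := fC_le (w := w) (k := k) (i := i); omega
      have hcc : cntU w k ≤ cntU w (k + 1) := by
        have := fC_le (w := w) (k := k + 1) (i := i)
        omega
      have := lemV hL1 hL2 hL3 hrk hp (by omega)
      omega

include hL1 hL2 hL3 hrk hp in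
lemma SB_of_new : ∀ i < w.length,
    (getL w i = (k + 1, true) ∨ getL w i = (k, false)) →
    FC w (k + 1) (i + 1) ≠ FC w k (i + 1) := by
  intro i hiN hl heq
  rcases hl with hx | hx
  · have h1 := FC_succ_eq hiN hx
    have h2 : FC w (k + 1) i ≤ cntU w (k + 1) + cntP w (k + 1) := FC_le_FC0
    have hv1 : 1 ≤ valCount w (k + 1) := one_le_valCount hiN (by rw [hx])
    have hvv := hp.2 (by omega)
    rw [valCount_split, valCount_split] at hvv
    have hM2 : FC w k (i + 1) + 2 ≤ cntU w k + cntP w k := by omega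
    obtain ⟨y₁, hy₁i, hy₁N, hx₁, hF₁⟩ := E3' (w := w) (k := k) (i := i + 1)
      (σ := FC w k (i + 1) + 1) (by omega) (by rw [FC_zero]; omega)
    obtain ⟨y₂, hy₂i, hy₂N, hx₂, hF₂⟩ := E3' (w := w) (k := k) (i := i + 1)
      (σ := FC w k (i + 1) + 2) (by omega) (by rw [FC_zero]; omega)
    have hy21 : y₂ < y₁ := by
      rcases lt_trichotomy y₂ y₁ with h' | h' | h'
      · exact h'
      · rw [h'] at hF₂; omega
      · have := FC_anti (w := w) (k := k) (show y₁ + 1 ≤ y₂ + 1 by omega)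
        omega
    have hy1i : y₁ < i := by
      rcases Nat.lt_or_ge y₁ i with h' | h'
      · exact h'
      · have : y₁ = i := by omega
        rw [this, hx] at hx₁; simp at hx₁
    have := hL3 (FC w k (i + 1) + 1) (by omega) y₂ i (by omega) hiN
      (by simp [starVal, hx₂]) (by rw [starSub_primed hx₂]; omega)
      (by simp [starVal, hx]) (by rw [starSub_primed hx]; omega)
      y₁ (by omega) (by omega) (by simp [starVal, hx₁])
    rw [starSub_primed hx₁] at this
    omega
  · have hfi : fC w k i < cntU w k := unprimed_lt hiN hx
    have hM : cntU w k ≤ FC w k (i + 1) := cntU_le_FC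
    have hMv' : FC w (k + 1) (i + 1) ≤ cntU w (k + 1) + cntP w (k + 1) := FC_le_FC0
    have hv1 : 1 ≤ valCount w (k + 1) := by rw [valCount_split]; omega
    have hvv := hp.2 (by omega)
    rw [valCount_split, valCount_split] at hvv
    obtain ⟨y, hyi, hyN, hxy, hFy⟩ := E3' (w := w) (k := k) (i := i + 1)
      (σ := FC w k (i + 1) + 1) (by omega) (by rw [FC_zero]; omega)
    have hyi' : y < i := by
      rcases Nat.lt_or_ge y i with h' | h'
      · exact h'
      · have : y = i := by omega
        rw [this, hx] at hxy; simp at hxy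
    by_cases hcM : cntU w (k + 1) < FC w k (i + 1)
    · obtain ⟨x, hix, hxN, hxx, hFx⟩ := E3 (w := w) (k := k + 1) (i := i + 1)
        (σ := FC w k (i + 1)) hcM (by omega)
      have := hL3 (FC w k (i + 1)) (by omega) y x (by omega) hxN
        (by simp [starVal, hxy]) (by rw [starSub_primed hxy]; omega)
        (by simp [starVal, hxx]) (by rw [starSub_primed hxx]; omega)
        i (by omega) (by omega) (by simp [starVal, hx])
      rw [starSub_unprimed hx] at this
      omega
    · push_neg at hcM
      have := lemV hL1 hL2 hL3 hrk hp (by omega)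
      omega

end NewToSt

section StToNew

variable (hk : 1 ≤ k)
  (hSA : ∀ i < w.length, (getL w i).1 = k + 1 → fC w (k + 1) i ≠ fC w k i)
  (hSB : ∀ i < w.length, (getL w i = (k + 1, true) ∨ getL w i = (k, false)) →
    FC w (k + 1) (i + 1) ≠ FC w k (i + 1))
  (hrk : ∀ i < w.length, getL w i = (k, true) → fC w k i < cntU w k)

include hSA in
lemma G0 : ∀ i, fC w (k + 1) i ≤ fC w k i := by
  intro i
  induction i with
  | zero => simp [fC_zero]
  | succ n ih =>
    by_cases hn : n < w.length
    · by_cases hx : getL w n = (k + 1, false)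
      · have h1 := fC_succ_eq hn hx
        have h2 := hSA n hn (by rw [hx])
        have h3 : fC w k n ≤ fC w k (n + 1) := fC_mono (by omega)
        omega
      · rw [fC_succ_ne hx]
        have h3 : fC w k n ≤ fC w k (n + 1) := fC_mono (by omega)
        omega
    · rw [fC_stop (by omega), fC_stop (by omega)] at ih ⊢
      exact ih

include hSA in
lemma cLe : cntU w (k + 1) ≤ cntU w k := by
  have := G0 hSA w.length
  rwa [fC_len, fC_len] at this

include hSA hSB in
lemma G0'aux : ∀ d i, w.length - i ≤ d → FC w (k + 1) i ≤ FC w k i := by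
  intro d
  induction d with
  | zero =>
    intro i hd
    rw [FC_stop (by omega), FC_stop (by omega)]
    exact cLe hSA
  | succ n ih =>
    intro i hd
    by_cases hN : w.length ≤ i
    · rw [FC_stop hN, FC_stop hN]; exact cLe hSA
    push_neg at hN
    have ih' := ih (i + 1) (by omega)
    by_cases hx : getL w i = (k + 1, true)
    · have h1 := FC_succ_eq hN hx
      have h2 := hSB i hN (Or.inl hx)
      have h3 : FC w k (i + 1) ≤ FC w k i := FC_anti (by omega)
      omega
    · rw [FC_succ_ne hx]
      have h3 : FC w k (i + 1) ≤ FC w k i := FC_anti (by omega)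
      omega

include hSA hSB in
lemma G0' : ∀ i, FC w (k + 1) i ≤ FC w k i := fun i =>
  G0'aux hSA hSB w.length i (by omega)

include hSA hrk in
lemma L1_of_st : ∀ i < w.length, starVal w i = k → starSub w i = 1 →
    ∀ j < i, starVal w j ≠ k + 1 := by
  intro i hiN hv hsub j hji hvj
  have hjN : j < w.length := by omega
  cases hb : (getL w i).2
  · have hxi : getL w i = (k, false) := getL_eq hv hb
    rw [starSub_unprimed hxi] at hsub
    have h1 : fC w k j ≤ fC w k i := fC_mono (by omega)
    have h2 := hSA j hjN hvj
    have h3 := G0 hSA j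
    omega
  · have hxi : getL w i = (k, true) := getL_eq hv hb
    rw [starSub_primed hxi] at hsub
    have h1 : cntU w k ≤ FC w k (i + 1) := cntU_le_FC
    have := hrk i hiN hxi
    omega

include hSA hSB in
lemma L2_of_st : ∀ m, 1 ≤ m → ∀ s t, s < t → t < w.length →
    starVal w s = k + 1 → starSub w s = m → starVal w t = k → starSub w t = m + 1 →
    ∀ u, s ≤ u → u ≤ t → starVal w u = k + 1 → starSub w u ≤ m := by
  intro m hm s t hst htN hvs hss hvt hstt u hsu hut hvu
  by_contra hμ
  push_neg at hμ
  have hsN : s < w.length := by omega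
  have huN : u < w.length := by omega
  cases hbt : (getL w t).2
  · -- t unprimed k
    have hxt : getL w t = (k, false) := getL_eq hvt hbt
    rw [starSub_unprimed hxt] at hstt
    cases hbu : (getL w u).2
    · have hxu : getL w u = (k + 1, false) := getL_eq hvu hbu
      rw [starSub_unprimed hxu] at hμ
      have h1 := hSA u huN (by rw [hxu])
      have h2 := G0 hSA u
      have h3 : fC w k u ≤ fC w k t := fC_mono hut
      omega
    · have hxu : getL w u = (k + 1, true) := getL_eq hvu hbu
      rw [starSub_primed hxu] at hμ
      cases hbs : (getL w s).2
      · have hxs : getL w s = (k + 1, false) := getL_eq hvs hbs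
        rw [starSub_unprimed hxs] at hss
        have hsu' : s < u := by
          rcases Nat.lt_or_ge s u with h' | h'
          · exact h'
          · have : s = u := by omega
            rw [this, hxu] at hxs; simp at hxs
        have h1 := fC_succ_eq hsN hxs
        have h2 : fC w (k + 1) (s + 1) ≤ fC w (k + 1) u := fC_mono (by omega)
        have h3 := hSA u huN (by rw [hxu])
        have h4 := G0 hSA u
        have h5 : fC w k u ≤ fC w k t := fC_mono hut
        have h6 : cntU w (k + 1) ≤ FC w (k + 1) (u + 1) := cntU_le_FC
        have h7 : fC w (k + 1) u ≤ cntU w (k + 1) := fC_le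
        omega
      · have hxs : getL w s = (k + 1, true) := getL_eq hvs hbs
        rw [starSub_primed hxs] at hss
        have h1 : FC w (k + 1) (u + 1) ≤ FC w (k + 1) (s + 1) := FC_anti (by omega)
        omega
  · -- t primed k
    have hxt : getL w t = (k, true) := getL_eq hvt hbt
    rw [starSub_primed hxt] at hstt
    have hcm : cntU w k ≤ m := by
      have := cntU_le_FC (w := w) (k := k) (i := t + 1); omega
    cases hbu : (getL w u).2
    · have hxu : getL w u = (k + 1, false) := getL_eq hvu hbu
      rw [starSub_unprimed hxu] at hμ
      have h1 := hSA u huN (by rw [hxu])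
      have h2 := G0 hSA u
      have h3 : fC w k u ≤ cntU w k := fC_le
      omega
    · have hxu : getL w u = (k + 1, true) := getL_eq hvu hbu
      rw [starSub_primed hxu] at hμ
      cases hbs : (getL w s).2
      · have hxs : getL w s = (k + 1, false) := getL_eq hvs hbs
        rw [starSub_unprimed hxs] at hss
        have hsu' : s < u := by
          rcases Nat.lt_or_ge s u with h' | h'
          · exact h'
          · have : s = u := by omega
            rw [this, hxu] at hxs; simp at hxs
        have h1 := fC_succ_eq hsN hxs
        have h2 : fC w (k + 1) (s + 1) ≤ fC w (k + 1) u := fC_mono (by omega)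
        have h3 := hSA u huN (by rw [hxu])
        have h4 := G0 hSA u
        have h5 : fC w k u ≤ cntU w k := fC_le
        have h6 : cntU w (k + 1) ≤ FC w (k + 1) (u + 1) := cntU_le_FC
        have h7 : fC w (k + 1) u ≤ cntU w (k + 1) := fC_le
        omega
      · have hxs : getL w s = (k + 1, true) := getL_eq hvs hbs
        rw [starSub_primed hxs] at hss
        have hsu' : s < u := by
          rcases Nat.lt_or_ge s u with h' | h'
          · exact h'
          · have : s = u := by omega
            rw [this] at hss; omega
        have h1 : FC w (k + 1) (u + 1) ≤ FC w (k + 1) (s + 1) := FC_anti (by omega)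
        omega

include hSA hSB in
lemma L3_of_st : ∀ m, 1 ≤ m → ∀ s t, s < t → t < w.length →
    starVal w s = k → starSub w s = m + 1 → starVal w t = k + 1 → starSub w t = m →
    ∀ u, s ≤ u → u ≤ t → starVal w u = k → m + 1 ≤ starSub w u := by
  intro m hm s t hst htN hvs hss hvt hstt u hsu hut hvu
  by_contra hμ
  push_neg at hμ
  have hsN : s < w.length := by omega
  have huN : u < w.length := by omega
  have hut' : u < t := by
    rcases Nat.lt_or_ge u t with h' | h'
    · exact h'
    · have : u = t := by omega
      rw [this, hvt] at hvu; omega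
  cases hbu : (getL w u).2
  · -- u unprimed k
    have hxu : getL w u = (k, false) := getL_eq hvu hbu
    rw [starSub_unprimed hxu] at hμ
    cases hbs : (getL w s).2
    · have hxs : getL w s = (k, false) := getL_eq hvs hbs
      rw [starSub_unprimed hxs] at hss
      have hsu' : s < u := by
        rcases Nat.lt_or_ge s u with h' | h'
        · exact h'
        · have : s = u := by omega
          rw [this] at hss; omega
      have h1 := fC_succ_eq hsN hxs
      have h2 : fC w k (s + 1) ≤ fC w k u := fC_mono (by omega)
      omega
    · have hxs : getL w s = (k, true) := getL_eq hvs hbs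
      rw [starSub_primed hxs] at hss
      have hsu' : s < u := by
        rcases Nat.lt_or_ge s u with h' | h'
        · exact h'
        · have : s = u := by omega
          rw [this, hxu] at hxs; simp at hxs
      have h1 : FC w k u ≤ FC w k (s + 1) := FC_anti (by omega)
      have h2 : FC w k (u + 1) ≤ FC w k u := FC_anti (by omega)
      have h3 := hSB u huN (Or.inr hxu)
      have h4 := G0' hSA hSB (u + 1)
      have h5 : cntU w (k + 1) ≤ FC w (k + 1) (u + 1) := cntU_le_FC
      cases hbt : (getL w t).2
      · have hxt : getL w t = (k + 1, false) := getL_eq hvt hbt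
        rw [starSub_unprimed hxt] at hstt
        have h6 := fC_succ_eq htN hxt
        have h7 : fC w (k + 1) (t + 1) ≤ cntU w (k + 1) := fC_le
        omega
      · have hxt : getL w t = (k + 1, true) := getL_eq hvt hbt
        rw [starSub_primed hxt] at hstt
        have h6 := FC_succ_eq htN hxt
        have h7 : FC w (k + 1) t ≤ FC w (k + 1) (u + 1) := FC_anti (by omega)
        omega
  · -- u primed k
    have hxu : getL w u = (k, true) := getL_eq hvu hbu
    rw [starSub_primed hxu] at hμ
    cases hbt : (getL w t).2
    · have hxt : getL w t = (k + 1, false) := getL_eq hvt hbt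
      rw [starSub_unprimed hxt] at hstt
      have h1 := hSA t htN (by rw [hxt])
      have h2 := G0 hSA t
      have h3 : fC w k t ≤ cntU w k := fC_le
      have h4 : cntU w k ≤ FC w k (u + 1) := cntU_le_FC
      omega
    · have hxt : getL w t = (k + 1, true) := getL_eq hvt hbt
      rw [starSub_primed hxt] at hstt
      have h1 := FC_succ_eq htN hxt
      have h2 : FC w k t ≤ FC w k (u + 1) := FC_anti (by omega)
      have h3 := G0' hSA hSB t
      omega

end StToNew


section Doubled

def phi (x : ℕ × Bool) : ℕ × Bool := if x.2 then (x.1, false) else (x.1 + 1, true)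

lemma hatW_eq (w : List (ℕ × Bool)) : hatW w = w.map phi := rfl

lemma doubled_length : (doubled w).length = w.length + w.length := by
  simp [doubled, hatW]

lemma cntU_map_phi (l : List (ℕ × Bool)) (κ : ℕ) : cntU (l.map phi) κ = cntP l κ := by
  induction l with
  | nil => simp [cntU, cntP]
  | cons x l ih =>
    rcases x with ⟨a, b⟩
    cases b <;> by_cases ha : a = κ <;>
      simp [cntU, cntP, phi, List.filter_cons, ha] at * <;> omega

lemma cntU_take_doubled_first (h : i ≤ w.length) (κ : ℕ) :
    cntU ((doubled w).take i) κ = fC w κ i := by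
  simp only [doubled]
  rw [List.take_append_of_le_length h, fC]

lemma getL_doubled_first (h : i < w.length) :
    getL (doubled w) i = getL w i := by
  simp only [doubled, getL]
  rw [List.getD_append _ _ _ i h]

lemma cntU_take_doubled_second {j : ℕ} (hj : j < w.length) (κ : ℕ) :
    cntU ((doubled w).take (w.length + w.length - 1 - j)) κ = FC w κ (j + 1) := by
  have hiNr : w.length + w.length - 1 - j = w.length + (w.length - 1 - j) := by omega
  rw [hiNr]
  simp only [doubled]
  rw [List.take_append,
    List.take_of_length_le (by omega), cntU_append]
  have h2 : w.length + (w.length - 1 - j) - w.length = w.length - 1 - j := by omega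
  rw [h2]
  have h3 : ((hatW w).reverse.take (w.length - 1 - j)) =
      ((hatW w).drop ((hatW w).length - (w.length - 1 - j))).reverse := List.take_reverse
  have h4 : (hatW w).length = w.length := by simp [hatW]
  have h5 : (hatW w).length - (w.length - 1 - j) = j + 1 := by omega
  rw [h3, h5]
  have h6 : ∀ l : List (ℕ × Bool), cntU l.reverse κ = cntU l κ := by
    intro l; simp [cntU, List.filter_reverse]
  rw [h6, hatW_eq, ← List.map_drop, cntU_map_phi]
  rw [FC]

lemma getL_doubled_second {j : ℕ} (hj : j < w.length) :
    getL (doubled w) (w.length + w.length - 1 - j) = phi (getL w j) := by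
  have hI : w.length + w.length - 1 - j < (doubled w).length := by
    rw [doubled_length]; omega
  have hlen : (hatW w).reverse.length = w.length := by simp [hatW]
  have h1 : w.length ≤ w.length + w.length - 1 - j := by omega
  rw [getL, List.getD_eq_getElem _ _ hI]
  simp only [doubled] at hI ⊢
  rw [List.getElem_append_right h1]
  rw [List.getElem_reverse]
  have h2 : (hatW w).length - 1 - (w.length + w.length - 1 - j - w.length) = j := by
    simp only [hatW_eq, List.length_map]; omega
  simp only [h2]
  simp only [hatW_eq, List.getElem_map]
  rw [getL, List.getD_eq_getElem _ _ hj]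

lemma latticeSt_iff : LatticeSt w ↔ (∀ k, 1 ≤ k →
    (∀ i < w.length, (getL w i).1 = k + 1 → fC w (k + 1) i ≠ fC w k i) ∧
    (∀ i < w.length, (getL w i = (k + 1, true) ∨ getL w i = (k, false)) →
      FC w (k + 1) (i + 1) ≠ FC w k (i + 1))) := by
  constructor
  · intro hSt k hk
    constructor
    · intro i hiN hv heq
      have hi2 : i < (doubled w).length := by rw [doubled_length]; omega
      apply hSt k hk i hi2
      · rw [cntU_take_doubled_first (by omega), cntU_take_doubled_first (by omega)]
        exact heq
      · rw [starVal, getL_doubled_first hiN]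
        exact hv
    · intro i hiN hl heq
      have hi2 : w.length + w.length - 1 - i < (doubled w).length := by
        rw [doubled_length]; omega
      apply hSt k hk _ hi2
      · rw [cntU_take_doubled_second hiN, cntU_take_doubled_second hiN]
        exact heq
      · rw [starVal, getL_doubled_second hiN]
        rcases hl with hx | hx <;> rw [hx] <;> simp [phi]
  · intro hsasb k hk i hiD heq hval
    rw [doubled_length] at hiD
    rcases Nat.lt_or_ge i w.length with hiN | hiN
    · rw [cntU_take_doubled_first (by omega), cntU_take_doubled_first (by omega)] at heq
      rw [starVal, getL_doubled_first hiN] at hval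
      exact (hsasb k hk).1 i hiN hval heq
    · set j := w.length + w.length - 1 - i with hj
      have hjN : j < w.length := by omega
      have hij : i = w.length + w.length - 1 - j := by omega
      rw [hij] at heq hval
      rw [cntU_take_doubled_second hjN, cntU_take_doubled_second hjN] at heq
      rw [starVal, getL_doubled_second hjN] at hval
      have hl : getL w j = (k + 1, true) ∨ getL w j = (k, false) := by
        rcases hgj : getL w j with ⟨a, b⟩
        rw [hgj] at hval
        cases b
        · right
          simp [phi] at hval
          simp [hval]
        · left
          simp [phi] at hval
          simp [hval]
      exact (hsasb k hk).2 j hjN hl heq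

end Doubled

end Aux

/-- For a word `w` over 𝒩 whose value-counts form a strict partition and in which, for
every `k ≥ 1`, the rightmost letter of value `k` is unprimed, Stembridge's lattice
property (Definition 3.5) is equivalent to the "lattice property" of Definition 3.3. -/
theorem stmt5 (w : List (ℕ × Bool)) (hpos : ∀ x ∈ w, 1 ≤ x.1)
    (hpart : ∀ k, 1 ≤ k → valCount w (k + 1) ≤ valCount w k ∧
      (valCount w (k + 1) ≠ 0 → valCount w (k + 1) < valCount w k))
    (hright : ∀ k, 1 ≤ k → ∀ i < w.length, starVal w i = k →
      (∀ j, i < j → j < w.length → starVal w j ≠ k) → (getL w i).2 = false) :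
    LatticeSt w ↔ LatticeNew w := by
  have hr : ∀ κ, 1 ≤ κ → ∀ i < w.length, getL w i = (κ, true) →
      Aux.fC w κ i < cntU w κ := fun κ hκ => Aux.HRcount (hright κ hκ)
  rw [Aux.latticeSt_iff]
  constructor
  · intro hsasb
    refine ⟨?_, ?_, ?_⟩
    · intro k hk
      exact Aux.L1_of_st (hsasb k hk).1 (hr k hk)
    · intro k m hk hm
      exact Aux.L2_of_st (hsasb k hk).1 (hsasb k hk).2 m hm
    · intro k m hk hm
      exact Aux.L3_of_st (hsasb k hk).1 (hsasb k hk).2 m hm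
  · intro hnew k hk
    obtain ⟨h1, h2, h3⟩ := hnew
    exact ⟨Aux.SA_of_new (h1 k hk) (fun m hm => h2 k m hk hm) (fun m hm => h3 k m hk hm)
        (hr k hk) (hpart k hk),
      Aux.SB_of_new (h1 k hk) (fun m hm => h2 k m hk hm) (fun m hm => h3 k m hk hm)
        (hr k hk) (hpart k hk)⟩
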